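/- If a non-crossing diagram D of Dynkin type D_n contains two distinct diameters of the same colour, say (i,i+n) and (j,j+n) with i ≢ j mod n, then every coloured diameter in nc D \ D is replaced by a pair of radii under r_D; consequently no diameter of nc D \ D has a diameter as its r_D-image. -/
import Mathlib


open scoped Classical

namespace DynkinD

/-- Vertices of the regular `2n`-gon, labelled by `ZMod (2*n)`. -/
abbrev Vtx (n : ℕ) := ZMod (2 * n)

/-- The element `n` of `ZMod (2*n)`, i.e. rotation by π. -/
def dN (n : ℕ) : Vtx n := (n : ZMod (2 * n))

/-- `x` lies strictly between `a` and `b` in anticlockwise order. -/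
def btw (n : ℕ) (a x b : Vtx n) : Prop :=
  0 < (x - a).val ∧ (x - a).val < (b - a).val

/-- The arcs `(i,j)` and `(k,l)` cross: the four vertices are pairwise distinct and
appear in anticlockwise cyclic order `i,k,j,l` or `k,i,l,j`. -/
def crosses (n : ℕ) (i j k l : Vtx n) : Prop :=
  (i ≠ j ∧ i ≠ k ∧ i ≠ l ∧ j ≠ k ∧ j ≠ l ∧ k ≠ l) ∧
  ((btw n i k j ∧ btw n j l i) ∨ (btw n k i l ∧ btw n l j k))

/-- Elements of the combinatorial model: pairs of arcs, coloured diameters,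
and coloured pairs of radii (through the centre). -/
inductive RElt (n : ℕ) where
  | pairArc (i j : Vtx n)
  | diam (i : Vtx n) (c : Bool)
  | radii (i : Vtx n) (c : Bool)

def isRadii {n : ℕ} : RElt n → Prop
  | .radii _ _ => True
  | _ => False

/-- Crossing of elements (colour-aware: diameters of the same colour never cross;
a pair of radii crosses another element iff the corresponding diameter does;
two pairs of radii never cross). -/
def crossElt (n : ℕ) : RElt n → RElt n → Prop
  | .pairArc i j, .pairArc k l => crosses n i j k l ∨ crosses n i j (k + dN n) (l + dN n)
  | .pairArc i j, .diam k _ => crosses n i j k (k + dN n)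
  | .diam k _, .pairArc i j => crosses n i j k (k + dN n)
  | .diam i c, .diam j c' => c ≠ c' ∧ crosses n i (i + dN n) j (j + dN n)
  | .radii i _, .pairArc k l => crosses n k l i (i + dN n)
  | .pairArc k l, .radii i _ => crosses n k l i (i + dN n)
  | .radii i c, .diam j c' => c ≠ c' ∧ crosses n i (i + dN n) j (j + dN n)
  | .diam j c', .radii i c => c ≠ c' ∧ crosses n i (i + dN n) j (j + dN n)
  | .radii _ _, .radii _ _ => False

/-- Crossing exactly once. -/
def crossOnceElt (n : ℕ) : RElt n → RElt n → Prop
  | .pairArc i j, .pairArc k l => Xor' (crosses n i j k l) (crosses n i j (k + dN n) (l + dN n))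
  | x, y => crossElt n x y

/-- Plain (colour-blind) geometric crossing of the underlying segments. -/
def geomCross (n : ℕ) : RElt n → RElt n → Prop
  | .pairArc i j, .pairArc k l => crosses n i j k l ∨ crosses n i j (k + dN n) (l + dN n)
  | .pairArc i j, .diam k _ => crosses n i j k (k + dN n)
  | .diam k _, .pairArc i j => crosses n i j k (k + dN n)
  | .diam i _, .diam j _ => crosses n i (i + dN n) j (j + dN n)
  | .radii i _, .pairArc k l => crosses n k l i (i + dN n)
  | .pairArc k l, .radii i _ => crosses n k l i (i + dN n)
  | .radii i _, .diam j _ => crosses n i (i + dN n) j (j + dN n)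
  | .diam j _, .radii i _ => crosses n i (i + dN n) j (j + dN n)
  | .radii _ _, .radii _ _ => False

/-- Identification of representatives of one pair of arcs / coloured diameter / pair of radii. -/
def symEq (n : ℕ) : RElt n → RElt n → Prop
  | .pairArc i j, .pairArc k l =>
      (k = i ∧ l = j) ∨ (k = j ∧ l = i) ∨
      (k = i + dN n ∧ l = j + dN n) ∨ (k = j + dN n ∧ l = i + dN n)
  | .diam i c, .diam j c' => c = c' ∧ (j = i ∨ j = i + dN n)
  | .radii i c, .radii j c' => c = c' ∧ (j = i ∨ j = i + dN n)
  | _, _ => False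

/-- Elements allowed in a diagram of Dynkin type `D_n`: no radii, and pairs of
arcs must be internal non-diameter arcs (no edges, no degenerate arcs). -/
def IsProper {n : ℕ} : RElt n → Prop
  | .pairArc i j => i ≠ j ∧ j ≠ i + dN n ∧ j ≠ i + 1 ∧ i ≠ j + 1
  | .diam _ _ => True
  | .radii _ _ => False

/-- Closure under the symmetries identifying representatives. -/
def SymClosed {n : ℕ} (D : Set (RElt n)) : Prop :=
  (∀ i j, RElt.pairArc i j ∈ D →
    RElt.pairArc j i ∈ D ∧ RElt.pairArc (i + dN n) (j + dN n) ∈ D) ∧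
  (∀ i c, RElt.diam i c ∈ D → RElt.diam (i + dN n) c ∈ D)

/-- A diagram of Dynkin type `D_n`. -/
def IsDiagram {n : ℕ} (D : Set (RElt n)) : Prop :=
  (∀ e ∈ D, IsProper e) ∧ SymClosed D

/-- A non-crossing collection. -/
def NonCrossing {n : ℕ} (D : Set (RElt n)) : Prop :=
  ∀ e ∈ D, ∀ f ∈ D, ¬ crossElt n e f

/-- `nc D` : the elements of `A(P_{2n})` crossing no element of `D`. -/
def ncD (n : ℕ) (D : Set (RElt n)) : Set (RElt n) :=
  {e | IsProper e ∧ ∀ f ∈ D, ¬ crossElt n e f}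

def HasDiam {n : ℕ} (D : Set (RElt n)) : Prop := ∃ i c, RElt.diam i c ∈ D

/-- The replacement map `r_D`: the identity if `D` has no diameters; otherwise it
replaces a coloured diameter by the correspondingly coloured pair of radii, unless
the oppositely coloured diameter with the same endpoints also lies in `D`. -/
noncomputable def rD {n : ℕ} (D : Set (RElt n)) (x : RElt n) : RElt n :=
  if ¬ HasDiam D then x
  else match x with
    | .diam i c =>
        if RElt.diam i (!c) ∈ D ∨ RElt.diam (i + dN n) (!c) ∈ D then .diam i c
        else .radii i c
    | y => y

/-- Vertices of the `2n`-gon together with the central vertex `c` (`none`). -/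
abbrev V (n : ℕ) := Option (Vtx n)

/-- Rotation by π (fixing the centre). -/
def rot (n : ℕ) : V n → V n := Option.map (· + dN n)

/-- Position of a vertex in the plane (the centre at the origin). -/
noncomputable def pos (n : ℕ) : V n → ℂ
  | none => 0
  | some k => Complex.exp (2 * Real.pi * Complex.I * (k.val : ℂ) / (2 * n))

/-- The clockwise angle `∠(x,y,z) ∈ [0,2π)` covered when rotating the segment
`(x,y)` to the segment `(y,z)` clockwise about `y`. -/
noncomputable def ang (n : ℕ) (x y z : V n) : ℝ :=
  let a := Complex.arg ((pos n x - pos n y) / (pos n z - pos n y))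
  if 0 ≤ a then a else a + 2 * Real.pi

/-- The unordered segments underlying an element (both π-rotated copies). -/
def segs (n : ℕ) : RElt n → Set (Sym2 (V n))
  | .pairArc i j => {s(some i, some j), s(some (i + dN n), some (j + dN n))}
  | .diam i _ => {s(some i, some (i + dN n))}
  | .radii i _ => {s(some i, none), s(some (i + dN n), none)}

/-- A `D`-cell of Dynkin type `D_n`: a polygon `⟨d_1,…,d_k⟩`, `k ≥ 3`, with
pairwise distinct vertices in `{0,…,2n-1} ∪ {c}`, whose sides underlie elements
of `r_D(D)` or edges of the `2n`-gon, satisfying the angle-minimality condition. -/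
structure Cell (n : ℕ) (D : Set (RElt n)) where
  k : ℕ
  hk : 3 ≤ k
  d : ZMod k → V n
  inj : Function.Injective d
  sides : ∀ i : ZMod k,
    (∃ e ∈ D, s(d i, d (i + 1)) ∈ segs n (rD D e)) ∨
    (∃ j : Vtx n, s(d i, d (i + 1)) = s(some j, some (j + 1)))
  minAngle : ∀ (i : ZMod k) (v : V n), (∃ e ∈ D, s(d i, v) ∈ segs n (rD D e)) →
    0 < ang n (d (i - 1)) (d i) v →
    0 < ang n (d (i - 1)) (d i) (d (i + 1)) ∧
      ang n (d (i - 1)) (d i) (d (i + 1)) ≤ ang n (d (i - 1)) (d i) v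

/-- `e` is contained in (the pair of `D`-cells of) `C`: `r_D(e)` is a diagonal. -/
def containedIn {n : ℕ} {D : Set (RElt n)} (C : Cell n D) (e : RElt n) : Prop :=
  ∃ i j : ZMod C.k, j ≠ i - 1 ∧ j ≠ i ∧ j ≠ i + 1 ∧ s(C.d i, C.d j) ∈ segs n (rD D e)

/-- Two cells determine the same pair of `D`-cells. -/
def SamePair {n : ℕ} {D : Set (RElt n)} (C C' : Cell n D) : Prop :=
  Set.range C'.d = Set.range C.d ∨ Set.range C'.d = rot n '' Set.range C.d

/-- A π-rotation-invariant cell. -/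
def RotInv {n : ℕ} {D : Set (RElt n)} (C : Cell n D) : Prop :=
  Set.range C.d = rot n '' Set.range C.d

/-- The segment from `u` to `v` is a diameter. -/
def isDiamSeg (n : ℕ) (u v : V n) : Prop := ∃ a : Vtx n, u = some a ∧ v = some (a + dN n)

/-- The colour rules for mutation: whenever the mutated element `e'` is a coloured
diameter, its colour is prescribed according to the diameters of `D`. -/
def colourRule (n : ℕ) (D : Set (RElt n)) (e e' : RElt n) : Prop :=
  ∀ (i : Vtx n) (c' : Bool), e' = RElt.diam i c' →
    ((¬ HasDiam D → ∃ j c, e = RElt.diam j c ∧ c' = !c) ∧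
     ((∃ x y cx cy, RElt.diam x cx ∈ D ∧ RElt.diam y cy ∈ D ∧ y ≠ x ∧ y ≠ x + dN n) →
        ∀ cγ : Bool, (∃ z, RElt.diam z cγ ∈ D) → c' = cγ) ∧
     (∀ (x : Vtx n) (cγ : Bool), RElt.diam x cγ ∈ D →
        (∀ z cz, RElt.diam z cz ∈ D → (z = x ∨ z = x + dN n) ∧ cz = cγ) →
        (c' = !cγ ↔ (i = x ∨ i = x + dN n))))

/-- The mutation `μ_D` as a relation: `D` is fixed pointwise, and an element not in `D`,
contained in a pair of `D`-cells with `r_D`-image the diagonal `(d_i,d_j)`, is sent to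
the element with `r_D`-image `(d_{i+1},d_{j+1})`, colours as prescribed. -/
def MutStep (n : ℕ) (D : Set (RElt n)) (e e' : RElt n) : Prop :=
  (e ∈ D ∧ e' = e) ∨
  (e ∉ D ∧ ¬ isRadii e' ∧ ∃ (C : Cell n D) (i j : ZMod C.k),
    j ≠ i - 1 ∧ j ≠ i ∧ j ≠ i + 1 ∧
    s(C.d i, C.d j) ∈ segs n (rD D e) ∧
    s(C.d (i + 1), C.d (j + 1)) ∈ segs n (rD D e') ∧
    colourRule n D e e')

/-- The mutation `μ_D^-` as a relation (rotating diagonals clockwise). -/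
def MutStepInv (n : ℕ) (D : Set (RElt n)) (e e' : RElt n) : Prop :=
  (e ∈ D ∧ e' = e) ∨
  (e ∉ D ∧ ¬ isRadii e' ∧ ∃ (C : Cell n D) (i j : ZMod C.k),
    j ≠ i - 1 ∧ j ≠ i ∧ j ≠ i + 1 ∧
    s(C.d i, C.d j) ∈ segs n (rD D e) ∧
    s(C.d (i - 1), C.d (j - 1)) ∈ segs n (rD D e') ∧
    colourRule n D e e')

end DynkinD

namespace DynkinD

lemma aux_dN_val {n : ℕ} (hn : 0 < n) : (dN n).val = n := by
  have h2 : n < 2 * n := by omega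
  simpa [dN, ZMod.val_natCast] using Nat.mod_eq_of_lt h2

lemma aux_dN_add_dN {n : ℕ} : dN n + dN n = (0 : Vtx n) := by
  have : (dN n) + (dN n) = ((2 * n : ℕ) : ZMod (2 * n)) := by
    push_cast [dN]; ring
  rw [this, ZMod.natCast_self]

lemma aux_neg_dN {n : ℕ} : -(dN n) = dN n :=
  neg_eq_of_add_eq_zero_left aux_dN_add_dN

lemma aux_diam_crosses {n : ℕ} (hn : 4 ≤ n) (m i : Vtx n)
    (h1 : m ≠ i) (h2 : m ≠ i + dN n) :
    crosses n m (m + dN n) i (i + dN n) := by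
  haveI : NeZero (2 * n) := ⟨by omega⟩
  have hn0 : 0 < n := by omega
  have hdval : (dN n).val = n := aux_dN_val hn0
  have hdne : (dN n) ≠ 0 := by
    intro h; rw [h] at hdval; simp [ZMod.val_zero] at hdval; omega
  have hmm : m ≠ m + dN n := by
    intro h; exact hdne (by linear_combination -h)
  have h3 : m + dN n ≠ i := by
    intro h
    apply h2
    have : m + dN n + dN n = i + dN n := by rw [h]
    rwa [add_assoc, aux_dN_add_dN, add_zero] at this
  have h4 : m + dN n ≠ i + dN n := fun h => h1 (by linear_combination h)
  have hii : i ≠ i + dN n := by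
    intro h; exact hdne (by linear_combination -h)
  -- the value v = (i - m).val
  set v := (i - m).val with hv
  have hv0 : v ≠ 0 := by
    simp only [hv, Ne, ZMod.val_eq_zero, sub_eq_zero]
    exact fun h => h1 h.symm
  have hvlt : v < 2 * n := ZMod.val_lt _
  have hvn : v ≠ n := by
    intro h
    apply h2
    have h' : ((v : ℕ) : ZMod (2 * n)) = dN n := by rw [h]; rfl
    rw [hv, ZMod.natCast_val, ZMod.cast_id] at h'
    have : i = m + dN n := by linear_combination h'
    rw [this, add_assoc, aux_dN_add_dN, add_zero]
  refine ⟨⟨hmm, h1, h2, h3, h4, hii⟩, ?_⟩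
  have hneg : (m - i).val = 2 * n - v := by
    have : m - i = -(i - m) := by ring
    rw [this, ZMod.neg_val, if_neg (by simpa [sub_eq_zero] using fun h : i = m => h1 h.symm)]
  rcases lt_or_gt_of_ne hvn with hlt | hgt
  · left
    constructor
    · constructor
      · exact Nat.pos_of_ne_zero hv0
      · have : (m + dN n - m) = dN n := by ring
        rw [this, hdval]; exact hlt
    · constructor
      · have : (i + dN n - (m + dN n)) = i - m := by ring
        rw [this]; exact Nat.pos_of_ne_zero hv0
      · have h5 : (m - (m + dN n)) = dN n := by
          have : m - (m + dN n) = -(dN n) := by ring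
          rw [this, aux_neg_dN]
        have h6 : (i + dN n - (m + dN n)) = i - m := by ring
        rw [h5, h6, hdval]; exact hlt
  · right
    constructor
    · constructor
      · rw [hneg]; omega
      · have : (i + dN n - i) = dN n := by ring
        rw [hneg, this, hdval]; omega
    · constructor
      · have : (m + dN n - (i + dN n)) = m - i := by ring
        rw [this, hneg]; omega
      · have h5 : (i - (i + dN n)) = dN n := by
          have : i - (i + dN n) = -(dN n) := by ring
          rw [this, aux_neg_dN]
        have h6 : (m + dN n - (i + dN n)) = m - i := by ring
        rw [h5, h6, hneg, hdval]; omega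

end DynkinD

open DynkinD in
/-- If a non-crossing diagram `D` contains two distinct same-coloured diameters, then
every coloured diameter of `nc D \ D` is replaced by a pair of radii under `r_D`. -/
theorem stmt_18 (n : ℕ) (hn : 4 ≤ n) (D : Set (RElt n))
    (hD : IsDiagram D) (hnc : NonCrossing D)
    (i j : Vtx n) (γ : Bool)
    (hi : RElt.diam i γ ∈ D) (hj : RElt.diam j γ ∈ D)
    (hne : j ≠ i ∧ j ≠ i + dN n)
    (m : Vtx n) (c : Bool)
    (hm : RElt.diam m c ∈ ncD n D) (hm' : RElt.diam m c ∉ D) :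
    ∃ (x : Vtx n) (c₀ : Bool), rD D (RElt.diam m c) = RElt.radii x c₀ := by
  have hHas : HasDiam D := ⟨i, γ, hi⟩
  -- helper: x in {i, i+dN} and {j, j+dN} is impossible
  have hclash : ∀ x : Vtx n, (x = i ∨ x = i + dN n) → (x = j ∨ x = j + dN n) → False := by
    rintro x (h1 | h1) (h2 | h2)
    · exact hne.1 (h2.symm.trans h1)
    · apply hne.2
      have : j + dN n + dN n = i + dN n := by rw [← h2, h1]
      rwa [add_assoc, aux_dN_add_dN, add_zero] at this
    · exact hne.2 (h2.symm.trans h1)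
    · exact hne.1 (add_right_cancel (h2.symm.trans h1))
  -- first: c = γ
  have hcγ : c = γ := by
    by_contra hcc
    have hki : m = i ∨ m = i + dN n := by
      by_contra hk
      push_neg at hk
      exact hm.2 _ hi ⟨hcc, aux_diam_crosses hn m i hk.1 hk.2⟩
    have hkj : m = j ∨ m = j + dN n := by
      by_contra hk
      push_neg at hk
      exact hm.2 _ hj ⟨hcc, aux_diam_crosses hn m j hk.1 hk.2⟩
    exact hclash m hki hkj
  subst hcγ
  -- any diameter of opposite colour in D leads to contradiction
  have hopp : ∀ x : Vtx n, RElt.diam x (!c) ∉ D := by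
    intro x hx
    have hki : x = i ∨ x = i + dN n := by
      by_contra hk
      push_neg at hk
      have hix : i ≠ x := fun h => hk.1 h.symm
      have hix' : i ≠ x + dN n := by
        intro h
        apply hk.2
        have : x + dN n + dN n = i + dN n := by rw [← h]
        rwa [add_assoc, aux_dN_add_dN, add_zero] at this
      exact hnc _ hi _ hx ⟨by simp, aux_diam_crosses hn i x hix hix'⟩
    have hkj : x = j ∨ x = j + dN n := by
      by_contra hk
      push_neg at hk
      have hjx : j ≠ x := fun h => hk.1 h.symm
      have hjx' : j ≠ x + dN n := by
        intro h
        apply hk.2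
        have : x + dN n + dN n = j + dN n := by rw [← h]
        rwa [add_assoc, aux_dN_add_dN, add_zero] at this
      exact hnc _ hj _ hx ⟨by simp, aux_diam_crosses hn j x hjx hjx'⟩
    exact hclash x hki hkj
  refine ⟨m, c, ?_⟩
  have hgoal : rD D (RElt.diam m c) =
      if RElt.diam m (!c) ∈ D ∨ RElt.diam (m + dN n) (!c) ∈ D then RElt.diam m c
      else RElt.radii m c := by
    rw [rD, if_neg (not_not.mpr hHas)]
  rw [hgoal, if_neg]
  rintro (h | h)
  · exact hopp m h
  · exact hopp (m + dN n) h
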